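/- arXiv:1006.5771 — 6 statements merged into one kernel-verified Lean document; each statement's English description precedes it below -/
import Mathlib

section
/- If X is an indecomposable continuum, then T(A) = X for every nonempty subset A of X, where T(A) is the set of points x such that every subcontinuum of X \ A containing x has empty interior in X. -/
open Set

/-- If `K` is closed connected, and `P, Q` are disjoint open sets with `K ∪ P ∪ Q = univ`,
then `Qᶜ = K ∪ P` is preconnected. -/
lemma union_piece_preconnected {X : Type*} [TopologicalSpace X] [ConnectedSpace X]
    {K P Q : Set X} (hKc : IsClosed K) (hK : IsConnected K)
    (hP : IsOpen P) (hQ : IsOpen Q) (hPQ : P ∩ Q = ∅)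
    (hcov : K ∪ P ∪ Q = univ) (hQK : Q ∩ K = ∅) (hPK : P ∩ K = ∅) :
    IsPreconnected (Qᶜ) := by
  have hQcc : IsClosed (Qᶜ) := hQ.isClosed_compl
  have hQceq : Qᶜ = K ∪ P := by
    apply Subset.antisymm
    · intro x hx
      have : x ∈ K ∪ P ∪ Q := hcov ▸ mem_univ x
      rcases this with h | h
      · exact h
      · exact absurd h hx
    · rintro x (hx | hx)
      · intro hq
        exact (Set.eq_empty_iff_forall_notMem.mp hQK x) ⟨hq, hx⟩
      · intro hq
        exact (Set.eq_empty_iff_forall_notMem.mp hPQ x) ⟨hx, hq⟩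
  rw [isPreconnected_iff_subset_of_fully_disjoint_closed hQcc]
  intro u v hu hv hsuv hdisj
  -- K is contained in u or in v
  have hKuv : K ⊆ u ∨ K ⊆ v := by
    by_contra h
    push_neg at h
    obtain ⟨hnu, hnv⟩ := h
    have hKs : K ⊆ u ∪ v := fun x hx => hsuv (by rw [hQceq]; exact Or.inl hx)
    have hne1 : (K ∩ u).Nonempty := by
      obtain ⟨x, hxK, hxv⟩ := not_subset.mp hnv
      rcases hKs hxK with h' | h'
      exacts [⟨x, hxK, h'⟩, absurd h' hxv]
    have hne2 : (K ∩ v).Nonempty := by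
      obtain ⟨x, hxK, hxu⟩ := not_subset.mp hnu
      rcases hKs hxK with h' | h'
      exacts [absurd h' hxu, ⟨x, hxK, h'⟩]
    obtain ⟨x, _, hx⟩ := isPreconnected_closed_iff.mp hK.isPreconnected u v hu hv hKs hne1 hne2
    exact hdisj.ne_of_mem hx.1 hx.2 rfl
  -- key step: if K ⊆ u then Qᶜ ⊆ u (and symmetrically)
  have key : ∀ u v : Set X, IsClosed u → IsClosed v → Qᶜ ⊆ u ∪ v → Disjoint u v →
      K ⊆ u → Qᶜ ⊆ u := by
    intro u v hu hv hsuv hdisj hKu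
    set F := Qᶜ ∩ uᶜ with hF
    have hFP : F ⊆ P := by
      intro x ⟨hx1, hx2⟩
      rw [hQceq] at hx1
      rcases hx1 with h | h
      · exact absurd (hKu h) hx2
      · exact h
    have hFopen : IsOpen F := by
      have : F = P ∩ uᶜ := by
        apply Subset.antisymm
        · exact fun x hx => ⟨hFP hx, hx.2⟩
        · rintro x ⟨hx1, hx2⟩
          exact ⟨by rw [hQceq]; exact Or.inr hx1, hx2⟩
      rw [this]
      exact hP.inter hu.isOpen_compl
    have hFclosed : IsClosed F := by
      have : F = Qᶜ ∩ v := by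
        apply Subset.antisymm
        · rintro x ⟨hx1, hx2⟩
          rcases hsuv hx1 with h | h
          exacts [absurd h hx2, ⟨hx1, h⟩]
        · rintro x ⟨hx1, hx2⟩
          exact ⟨hx1, fun hxu => hdisj.ne_of_mem hxu hx2 rfl⟩
      rw [this]
      exact hQcc.inter hv
    have hclopen : IsClopen F := ⟨hFclosed, hFopen⟩
    rcases isClopen_iff.mp hclopen with h | h
    · intro x hx
      by_contra hxu
      exact absurd (show x ∈ F from ⟨hx, hxu⟩) (by rw [h]; exact fun h => h)
    · exfalso
      obtain ⟨k, hk⟩ := hK.nonempty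
      have : k ∈ F := by rw [h]; trivial
      exact this.2 (hKu hk)
  rcases hKuv with h | h
  · exact Or.inl (key u v hu hv hsuv hdisj h)
  · exact Or.inr (key v u hv hu (by rwa [union_comm]) hdisj.symm h)

/-- In an indecomposable continuum, every proper subcontinuum has empty interior. -/
lemma proper_subcontinuum_empty_interior {X : Type*} [MetricSpace X] [CompactSpace X]
    [ConnectedSpace X]
    (hindec : ¬ ∃ A B : Set X, A.Nonempty ∧ IsCompact A ∧ IsConnected A ∧ A ≠ Set.univ ∧
      B.Nonempty ∧ IsCompact B ∧ IsConnected B ∧ B ≠ Set.univ ∧ A ∪ B = Set.univ)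
    {K : Set X} (hKcomp : IsCompact K) (hKconn : IsConnected K) (hKne : K ≠ univ) :
    interior K = ∅ := by
  by_contra hint
  have hKcl : IsClosed K := hKcomp.isClosed
  have hcompl_ne : Kᶜ.Nonempty := by
    rcases nonempty_compl.mpr hKne with ⟨x, hx⟩
    exact ⟨x, hx⟩
  by_cases hconn : IsPreconnected (Kᶜ)
  · -- X = K ∪ closure Kᶜ is a decomposition
    apply hindec
    refine ⟨K, closure Kᶜ, hKconn.nonempty, hKcomp, hKconn, hKne, ?_, ?_, ?_, ?_, ?_⟩
    · exact hcompl_ne.closure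
    · exact isClosed_closure.isCompact
    · exact ⟨hcompl_ne.closure, hconn.closure⟩
    · rw [closure_compl]
      intro h
      rcases nonempty_iff_ne_empty.mp (nonempty_iff_ne_empty.mpr hint) with _
      have : (interior K)ᶜ = univ := h
      have : interior K = ∅ := by
        rw [← compl_univ, ← this, compl_compl]
      exact hint this
    · rw [closure_compl]
      apply Subset.antisymm (subset_univ _)
      intro x _
      by_cases hx : x ∈ interior K
      · exact Or.inl (interior_subset hx)
      · exact Or.inr hx
  · -- Kᶜ disconnects into P and Q; get decomposition K ∪ P, K ∪ Q
    rw [IsPreconnected] at hconn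
    push_neg at hconn
    obtain ⟨u, v, hu, hv, hsub, hne1, hne2, hempty⟩ := hconn
    have hKo : IsOpen (Kᶜ) := hKcl.isOpen_compl
    set P := Kᶜ ∩ u with hPdef
    set Q := Kᶜ ∩ v with hQdef
    have hPopen : IsOpen P := hKo.inter hu
    have hQopen : IsOpen Q := hKo.inter hv
    have hPQ : P ∩ Q = ∅ := by
      rw [hPdef, hQdef]
      have : Kᶜ ∩ u ∩ (Kᶜ ∩ v) ⊆ Kᶜ ∩ (u ∩ v) := by
        rintro x ⟨⟨h1, h2⟩, ⟨_, h4⟩⟩; exact ⟨h1, h2, h4⟩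
      exact eq_empty_of_subset_empty (hempty ▸ this)
    have hcov : K ∪ P ∪ Q = univ := by
      apply Subset.antisymm (subset_univ _)
      intro x _
      by_cases hx : x ∈ K
      · exact Or.inl (Or.inl hx)
      · rcases hsub hx with h | h
        · exact Or.inl (Or.inr ⟨hx, h⟩)
        · exact Or.inr ⟨hx, h⟩
    have hPK : P ∩ K = ∅ := by
      rw [hPdef]; ext x; simp only [mem_inter_iff, mem_compl_iff, mem_empty_iff_false, iff_false]
      rintro ⟨⟨h, _⟩, h'⟩; exact h h'
    have hQK : Q ∩ K = ∅ := by
      rw [hQdef]; ext x; simp only [mem_inter_iff, mem_compl_iff, mem_empty_iff_false, iff_false]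
      rintro ⟨⟨h, _⟩, h'⟩; exact h h'
    have hA := union_piece_preconnected hKcl hKconn hPopen hQopen hPQ hcov hQK hPK
    have hB := union_piece_preconnected hKcl hKconn hQopen hPopen
      (by rw [inter_comm]; exact hPQ)
      (by rw [union_right_comm]; exact hcov) hPK hQK
    obtain ⟨p, hp⟩ := hne1
    obtain ⟨q, hq⟩ := hne2
    have hpP : p ∈ P := ⟨hp.1, hp.2⟩
    have hqQ : q ∈ Q := ⟨hq.1, hq.2⟩
    have hpQ : p ∉ Q := fun h => Set.eq_empty_iff_forall_notMem.mp hPQ p ⟨hpP, h⟩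
    have hqP : q ∉ P := fun h => Set.eq_empty_iff_forall_notMem.mp hPQ q ⟨h, hqQ⟩
    apply hindec
    refine ⟨Qᶜ, Pᶜ, ⟨p, hpQ⟩, hQopen.isClosed_compl.isCompact, ⟨⟨p, hpQ⟩, hA⟩, ?_,
      ⟨q, hqP⟩, hPopen.isClosed_compl.isCompact, ⟨⟨q, hqP⟩, hB⟩, ?_, ?_⟩
    · intro h
      have : q ∈ Qᶜ := h ▸ trivial
      exact this hqQ
    · intro h
      have : p ∈ Pᶜ := h ▸ trivial
      exact this hpP
    · rw [← compl_inter, inter_comm, hPQ, compl_empty]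

/-- Jones' set function `T`. -/
def JonesT {X : Type*} [TopologicalSpace X] (A : Set X) : Set X :=
  {x | ∀ K : Set X, IsCompact K → IsConnected K → K ⊆ Aᶜ → x ∈ K → interior K = ∅}

/-- If X is an indecomposable continuum then T(A) = X for every nonempty A ⊆ X. -/
theorem stmt_5 {X : Type*} [MetricSpace X] [CompactSpace X] [ConnectedSpace X]
    [Nonempty X]
    (hindec : ¬ ∃ A B : Set X, A.Nonempty ∧ IsCompact A ∧ IsConnected A ∧ A ≠ Set.univ ∧
      B.Nonempty ∧ IsCompact B ∧ IsConnected B ∧ B ≠ Set.univ ∧ A ∪ B = Set.univ) :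
    ∀ A : Set X, A.Nonempty → JonesT A = Set.univ := by
  intro A hA
  apply Set.Subset.antisymm (Set.subset_univ _)
  intro x _
  intro K hKcomp hKconn hKA _
  apply proper_subcontinuum_empty_interior hindec hKcomp hKconn
  intro h
  obtain ⟨a, ha⟩ := hA
  have : a ∈ K := h ▸ trivial
  exact hKA this ha
end

section
/- Let R : X → X be a continuous, open, surjective map of a compact metric space X such that preimages of points are finite and preimages of continua have finitely many components, each mapping onto the image (confluence). If A ⊆ X satisfies T(A) = A, then T(R⁻¹(A)) = R⁻¹(A), where T(B) = { x ∈ X : every subcontinuum of X \ B containing x has empty interior in X }. -/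
/-- If R is a continuous open surjection of a continuum with finite fibers,
confluent (each component of the preimage of a continuum maps onto it, and there
are finitely many such components), then the preimage of a T-closed set is T-closed. -/
theorem stmt_8 {X : Type*} [MetricSpace X] [CompactSpace X] [ConnectedSpace X]
    [Nonempty X] (R : X → X) (hc : Continuous R) (ho : IsOpenMap R)
    (hs : Function.Surjective R)
    (hfib : ∀ y : X, (R ⁻¹' {y}).Finite)
    (hconf : ∀ Q : Set X, Q.Nonempty → IsCompact Q → IsConnected Q →
      (∀ x ∈ R ⁻¹' Q, R '' connectedComponentIn (R ⁻¹' Q) x = Q) ∧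
      {C : Set X | ∃ x ∈ R ⁻¹' Q, C = connectedComponentIn (R ⁻¹' Q) x}.Finite)
    (A : Set X) (hT : JonesT A = A) :
    JonesT (R ⁻¹' A) = R ⁻¹' A := by
  apply Set.Subset.antisymm
  · -- hard direction
    intro x hx
    by_contra hxA
    have hRxA : R x ∉ JonesT A := by rw [hT]; exact hxA
    simp only [JonesT, Set.mem_setOf_eq] at hRxA
    push_neg at hRxA
    obtain ⟨Q, hQc, hQconn, hQA, hRxQ, hQint⟩ := hRxA
    obtain ⟨hsurj, hfin⟩ := hconf Q ⟨R x, hRxQ⟩ hQc hQconn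
    have hxQ : x ∈ R ⁻¹' Q := hRxQ
    set s : Set X := R ⁻¹' Q with hs'
    set C := connectedComponentIn s x with hCdef
    have hsc : IsCompact s := (hQc.isClosed.preimage hc).isCompact
    have : CompactSpace s := isCompact_iff_compactSpace.mp hsc
    have hcomp_compact : ∀ y ∈ s, IsCompact (connectedComponentIn s y) := by
      intro y hy
      rw [connectedComponentIn_eq_image hy]
      exact isClosed_connectedComponent.isCompact.image continuous_subtype_val
    -- the finite family of components other than C
    set F : Set (Set X) := {C' : Set X | ∃ y ∈ s, C' = connectedComponentIn s y} with hF
    have hFdiff : (F \ {C}).Finite := hfin.subset Set.diff_subset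
    have hSclosed : IsClosed (⋃₀ (F \ {C})) := by
      rw [Set.sUnion_eq_biUnion]
      refine hFdiff.isClosed_biUnion ?_
      rintro C' ⟨⟨y, hy, rfl⟩, -⟩
      exact (hcomp_compact y hy).isClosed
    -- the open set witnessing nonempty interior of C
    have hUopen : IsOpen (R ⁻¹' (interior Q) ∩ (⋃₀ (F \ {C}))ᶜ) :=
      (isOpen_interior.preimage hc).inter hSclosed.isOpen_compl
    have hUsub : R ⁻¹' (interior Q) ∩ (⋃₀ (F \ {C}))ᶜ ⊆ C := by
      rintro z ⟨hz1, hz2⟩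
      have hzs : z ∈ s := show R z ∈ Q from interior_subset hz1
      by_cases h : connectedComponentIn s z = C
      · rw [← h]; exact mem_connectedComponentIn hzs
      · refine absurd (Set.mem_sUnion.mpr ⟨connectedComponentIn s z, ?_,
          mem_connectedComponentIn hzs⟩) hz2
        exact ⟨⟨z, hzs, rfl⟩, by simpa using h⟩
    have hUne : (R ⁻¹' (interior Q) ∩ (⋃₀ (F \ {C}))ᶜ).Nonempty := by
      obtain ⟨v, hv⟩ := hQint
      have hvQ : v ∈ Q := interior_subset hv
      have : v ∈ R '' C := by rw [hsurj x hxQ]; exact hvQ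
      obtain ⟨c, hcC, rfl⟩ := this
      refine ⟨c, hv, ?_⟩
      rintro ⟨C', ⟨⟨y, hy, rfl⟩, hne⟩, hcC'⟩
      have hcs : c ∈ s := connectedComponentIn_subset s x hcC
      have h1 : connectedComponentIn s y = connectedComponentIn s c :=
        connectedComponentIn_eq hcC'
      have h2 : connectedComponentIn s x = connectedComponentIn s c :=
        connectedComponentIn_eq hcC
      exact hne (by rw [h1, ← h2]; rfl)
    -- contradict x ∈ JonesT (R⁻¹ A)
    have hCcomp : IsCompact C := hcomp_compact x hxQ
    have hCconn : IsConnected C := (isConnected_connectedComponentIn_iff).mpr hxQ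
    have hCsub : C ⊆ (R ⁻¹' A)ᶜ := fun z hz => fun hzA =>
      hQA (connectedComponentIn_subset s x hz) hzA
    have hint := hx C hCcomp hCconn hCsub (mem_connectedComponentIn hxQ)
    have : (interior C).Nonempty := hUne.mono (interior_maximal hUsub hUopen)
    rw [hint] at this
    exact this.ne_empty rfl
  · -- easy direction
    intro x hx K _ _ hK hxK
    exact absurd (hK hxK) (by simpa using hx)
end

section
/- Let X be a continuum and m : X → Y a monotone quotient map onto a finite tree Y such that every fiber m⁻¹(y) has empty interior in X. Let R : X → X be continuous and open, mapping each fiber of m onto a fiber of m. Then the induced map g : Y → Y with g ∘ m = m ∘ R is well-defined, continuous, and open. -/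
/-- Let X be a continuum, m a monotone quotient map onto a finite tree Y with
nowhere dense fibers, and R continuous open on X mapping fibers onto fibers.
Then the induced map g with g ∘ m = m ∘ R is well-defined, continuous and open. -/
theorem stmt_11 {X Y : Type*} [MetricSpace X] [CompactSpace X] [ConnectedSpace X]
    [Nonempty X] [MetricSpace Y] [CompactSpace Y] [ConnectedSpace Y]
    [Nonempty Y] [LocallyConnectedSpace Y]
    (hnoscc : ∀ S : Set Y, ¬ Nonempty (AddCircle (1 : ℝ) ≃ₜ S))
    (hend_fin : {y : Y | IsPreconnected ({y}ᶜ : Set Y)}.Finite)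
    (m : X → Y) (hm : Topology.IsQuotientMap m) (hmono : ∀ y : Y, IsConnected (m ⁻¹' {y}))
    (hnd : ∀ y : Y, interior (m ⁻¹' {y}) = ∅)
    (R : X → X) (hRc : Continuous R) (hRo : IsOpenMap R) (hRs : Function.Surjective R)
    (hfib : ∀ y : Y, ∃ y' : Y, R '' (m ⁻¹' {y}) = m ⁻¹' {y'}) :
    ∃ g : Y → Y, Continuous g ∧ IsOpenMap g ∧ g ∘ m = m ∘ R := by
  classical
  set g : Y → Y := fun y => (hfib y).choose with hg
  have hgspec : ∀ y : Y, R '' (m ⁻¹' {y}) = m ⁻¹' {g y} := fun y => (hfib y).choose_spec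
  have hcomp : g ∘ m = m ∘ R := by
    funext x
    have hx : R x ∈ R '' (m ⁻¹' {m x}) := ⟨x, rfl, rfl⟩
    rw [hgspec (m x)] at hx
    exact hx.symm
  refine ⟨g, ?_, ?_, hcomp⟩
  · rw [hm.continuous_iff, hcomp]
    exact (hm.continuous).comp hRc
  · intro U hU
    have hkey : m ⁻¹' (g '' U) = R '' (m ⁻¹' U) := by
      ext x
      constructor
      · rintro ⟨y, hyU, hy⟩
        have : x ∈ m ⁻¹' {g y} := by simp [hy]
        rw [← hgspec y] at this
        obtain ⟨z, hz, hzx⟩ := this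
        have hmz : m z = y := hz
        exact ⟨z, by rw [Set.mem_preimage, hmz]; exact hyU, hzx⟩
      · rintro ⟨z, hz, rfl⟩
        have : R z ∈ R '' (m ⁻¹' {m z}) := ⟨z, rfl, rfl⟩
        rw [hgspec (m z)] at this
        exact ⟨m z, hz, this.symm⟩
    rw [hm.isOpen_preimage.symm, hkey]
    exact hRo _ (hm.continuous.isOpen_preimage U hU)
end

section
/- Let X be a compact metric space, R : X → X a continuous surjection such that every point has at most d preimages, and m : X → Y a quotient map with connected fibers semiconjugating R to g : Y → Y (g ∘ m = m ∘ R), such that the image under R of each fiber of m is a fiber of m. Then every point of Y has at most d preimages under g. -/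
/-- If R has fibers of cardinality at most d and m semiconjugates R to g with
connected fibers, the image under R of each fiber of m being a fiber of m,
then g has fibers of cardinality at most d. -/
theorem stmt_13 {X Y : Type*} [MetricSpace X] [CompactSpace X] [MetricSpace Y]
    [CompactSpace Y] (d : ℕ) (m : X → Y) (hmc : Continuous m)
    (hms : Function.Surjective m) (hmono : ∀ y : Y, IsConnected (m ⁻¹' {y}))
    (R : X → X) (hRc : Continuous R)
    (hRd : ∀ x : X, (R ⁻¹' {x}).Finite ∧ (R ⁻¹' {x}).ncard ≤ d)
    (g : Y → Y) (hgc : Continuous g) (hsemi : g ∘ m = m ∘ R)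
    (hfib : ∀ y : Y, R '' (m ⁻¹' {y}) = m ⁻¹' {g y}) :
    ∀ y : Y, (g ⁻¹' {y}).Finite ∧ (g ⁻¹' {y}).ncard ≤ d := by
  intro y
  obtain ⟨x₀, hx₀⟩ := hms y
  have hsub : g ⁻¹' {y} ⊆ m '' (R ⁻¹' {x₀}) := by
    intro z hz
    have hz' : g z = y := hz
    have hx₀mem : x₀ ∈ m ⁻¹' {g z} := by simp [hz', hx₀]
    rw [← hfib z] at hx₀mem
    obtain ⟨x, hxm, hxR⟩ := hx₀mem
    exact ⟨x, hxR, hxm⟩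
  have hfin : (m '' (R ⁻¹' {x₀})).Finite := (hRd x₀).1.image m
  refine ⟨hfin.subset hsub, ?_⟩
  calc (g ⁻¹' {y}).ncard ≤ (m '' (R ⁻¹' {x₀})).ncard := Set.ncard_le_ncard hsub hfin
    _ ≤ (R ⁻¹' {x₀}).ncard := Set.ncard_image_le (hRd x₀).1
    _ ≤ d := (hRd x₀).2
end

section
/- Let X be a continuum, A ⊆ X with T(A) = A, and let K be a connected component of A. Then T(K) = K (every component of a T-closed set is T-closed). -/
open Set Metric

/-- The connected component of a point in a compact set is compact. -/
lemma auxT_compact_ccIn {X : Type*} [TopologicalSpace X] [T2Space X] {F : Set X}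
    (hF : IsCompact F) (p : X) : IsCompact (connectedComponentIn F p) := by
  by_cases hp : p ∈ F
  · haveI : CompactSpace F := isCompact_iff_compactSpace.mp hF
    rw [connectedComponentIn_eq_image hp]
    exact (isClosed_connectedComponent.isCompact).image continuous_subtype_val
  · rw [connectedComponentIn_eq_empty hp]
    exact isCompact_empty

/-- Boundary bumping: the connected component of a point in a proper closed subset of a
continuum meets the frontier of that subset. -/
lemma auxT_bump {X : Type*} [TopologicalSpace X] [CompactSpace X] [T2Space X]
    [PreconnectedSpace X] {F : Set X} (hF : IsClosed F) (hFne : F ≠ univ) {p : X}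
    (hp : p ∈ F) : (connectedComponentIn F p ∩ frontier F).Nonempty := by
  by_contra h
  rw [Set.not_nonempty_iff_eq_empty] at h
  haveI : CompactSpace F := isCompact_iff_compactSpace.mp hF.isCompact
  set p' : F := ⟨p, hp⟩ with hp'
  set D : Set F := Subtype.val ⁻¹' frontier F with hD
  have hDclosed : IsClosed D := isClosed_frontier.preimage continuous_subtype_val
  have hDcomp : IsCompact D := hDclosed.isCompact
  have hdisj : D ∩ ⋂ s : { s : Set F // IsClopen s ∧ p' ∈ s }, (s : Set F) = ∅ := by
    rw [← connectedComponent_eq_iInter_isClopen p']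
    ext z
    simp only [mem_inter_iff, mem_empty_iff_false, iff_false, not_and]
    intro hzD hzc
    have : (z : X) ∈ connectedComponentIn F p ∩ frontier F := by
      refine ⟨?_, hzD⟩
      rw [connectedComponentIn_eq_image hp]
      exact ⟨z, hzc, rfl⟩
    rw [h] at this
    exact this
  obtain ⟨u, hu⟩ := hDcomp.elim_finite_subfamily_closed
    (fun s : { s : Set F // IsClopen s ∧ p' ∈ s } => (s : Set F))
    (fun s => s.2.1.1) hdisj
  set Z : Set F := ⋂ s ∈ u, (s : Set F) with hZ
  have hZclopen : IsClopen Z := isClopen_biInter_finset fun s _ => s.2.1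
  have hpZ : p' ∈ Z := mem_iInter₂.mpr fun s _ => s.2.2
  have hZD : Z ∩ D = ∅ := by rw [inter_comm]; exact hu
  set E : Set X := Subtype.val '' Z with hE
  have hEF : E ⊆ F := by rintro _ ⟨z, _, rfl⟩; exact z.2
  have hEint : E ⊆ interior F := by
    rintro _ ⟨z, hz, rfl⟩
    by_contra hzi
    have hzf : (z : X) ∈ frontier F := by
      rw [hF.frontier_eq]; exact ⟨z.2, hzi⟩
    have : z ∈ Z ∩ D := ⟨hz, hzf⟩
    rw [hZD] at this
    exact this
  have hEclosed : IsClosed E :=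
    (hZclopen.1.isCompact.image continuous_subtype_val).isClosed
  have hEopen : IsOpen E := by
    obtain ⟨O, hO, hOZ⟩ := isOpen_induced_iff.mp hZclopen.2
    have : E = O ∩ interior F := by
      apply Subset.antisymm
      · rintro _ ⟨z, hz, rfl⟩
        refine ⟨?_, hEint ⟨z, hz, rfl⟩⟩
        rw [← hOZ] at hz; exact hz
      · rintro y ⟨hyO, hyF⟩
        have hyF' : y ∈ F := interior_subset hyF
        refine ⟨⟨y, hyF'⟩, ?_, rfl⟩
        rw [← hOZ]; exact hyO
    rw [this]
    exact hO.inter isOpen_interior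
  rcases isClopen_iff.mp ⟨hEclosed, hEopen⟩ with h1 | h1
  · have : p ∈ E := ⟨p', hpZ, rfl⟩
    rw [h1] at this; exact this
  · exact hFne (univ_subset_iff.mp (h1 ▸ hEF))

/-- Every connected component of a T-closed subset of a continuum is T-closed. -/
theorem stmt_16 {X : Type*} [MetricSpace X] [CompactSpace X] [ConnectedSpace X]
    [Nonempty X] (A : Set X) (hT : JonesT A = A) (x : X) (hx : x ∈ A) :
    JonesT (connectedComponentIn A x) = connectedComponentIn A x := by
  set K := connectedComponentIn A x with hKdef
  have hKA : K ⊆ A := connectedComponentIn_subset A x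
  have hxK : x ∈ K := mem_connectedComponentIn hx
  apply Subset.antisymm
  · intro p hpT
    have hpA : p ∈ A := by
      rw [← hT]
      intro W hWc hWconn hWsub hpW
      exact hpT W hWc hWconn (fun z hz hzK => hWsub hz (hKA hzK)) hpW
    -- any point of `A` in the closure of `K` is in `K`
    have hmem : ∀ w, w ∈ closure K → w ∈ A → w ∈ K := by
      intro w hw hwA
      have h1 : IsPreconnected (insert w K) :=
        isPreconnected_connectedComponentIn.subset_closure (subset_insert w K)
          (insert_subset_iff.mpr ⟨hw, subset_closure⟩)
      exact h1.subset_connectedComponentIn (mem_insert_iff.mpr (Or.inr hxK))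
        (insert_subset_iff.mpr ⟨hwA, hKA⟩) (mem_insert w K)
    by_cases hpcl : p ∈ closure K
    · exact hmem p hpcl hpA
    -- points outside `A` lie on continua in `Aᶜ` with nonempty interior
    have hZex : ∀ q, q ∉ A → ∃ Z : Set X,
        IsCompact Z ∧ IsConnected Z ∧ Z ⊆ Aᶜ ∧ q ∈ Z ∧ interior Z ≠ ∅ := by
      intro q hq
      have hq' : q ∉ JonesT A := by rw [hT]; exact hq
      simp only [JonesT, mem_setOf_eq, not_forall] at hq'
      obtain ⟨Z, h1, h2, h3, h4, h5⟩ := hq'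
      exact ⟨Z, h1, h2, h3, h4, h5⟩
    set L := closure K with hLdef
    have hLc : IsClosed L := isClosed_closure
    have hLne : L.Nonempty := ⟨x, subset_closure hxK⟩
    have hδ : 0 < infDist p L := (hLc.notMem_iff_infDist_pos hLne).mp hpcl
    set δ := infDist p L with hδdef
    set F : ℕ → Set X := fun n => {z | δ / ((n : ℝ) + 1) ≤ infDist z L} with hFdef
    have hεpos : ∀ n : ℕ, 0 < δ / ((n : ℝ) + 1) := fun n => by positivity
    have hFclosed : ∀ n, IsClosed (F n) := fun n =>
      isClosed_le continuous_const (continuous_infDist_pt L)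
    have hpF : ∀ n, p ∈ F n := fun n => by
      show δ / ((n : ℝ) + 1) ≤ infDist p L
      rw [← hδdef]
      exact div_le_self hδ.le (le_add_of_nonneg_left n.cast_nonneg)
    have hFL : ∀ n, ∀ z ∈ F n, z ∉ L := by
      intro n z hz hzL
      have h0 : infDist z L = 0 := infDist_zero_of_mem hzL
      have : δ / ((n : ℝ) + 1) ≤ 0 := h0 ▸ hz
      exact absurd this (not_le.mpr (hεpos n))
    have hFne : ∀ n, F n ≠ univ := by
      intro n hn
      exact hFL n x (hn ▸ mem_univ x) (subset_closure hxK)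
    set W : ℕ → Set X := fun n => connectedComponentIn (F n) p with hWdef
    have hWF : ∀ n, W n ⊆ F n := fun n => connectedComponentIn_subset _ _
    have hWK : ∀ n, W n ⊆ Kᶜ := fun n z hz hzK => hFL n z (hWF n hz) (subset_closure hzK)
    have hWp : ∀ n, p ∈ W n := fun n => mem_connectedComponentIn (hpF n)
    have hWcompact : ∀ n, IsCompact (W n) := fun n =>
      auxT_compact_ccIn (hFclosed n).isCompact p
    have hWconn : ∀ n, IsConnected (W n) := fun n =>
      isConnected_connectedComponentIn_iff.mpr (hpF n)
    by_cases hWA : ∀ n, W n ⊆ A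
    · set Y := ⋃ n, W n with hYdef
      have hYconn : IsPreconnected Y := by
        have h := isPreconnected_sUnion p (Set.range W)
          (by rintro s ⟨n, rfl⟩; exact hWp n)
          (by rintro s ⟨n, rfl⟩; exact (hWconn n).isPreconnected)
        rwa [sUnion_range] at h
      have hpY : p ∈ Y := mem_iUnion.mpr ⟨0, hWp 0⟩
      have hYA : Y ⊆ A := iUnion_subset hWA
      have hDne : (closure Y ∩ L).Nonempty := by
        by_contra hD
        rw [not_nonempty_iff_eq_empty] at hD
        have hcYcomp : IsCompact (closure Y) := isClosed_closure.isCompact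
        obtain ⟨y₀, hy₀, hy₀min⟩ := hcYcomp.exists_isMinOn ⟨p, subset_closure hpY⟩
          (continuous_infDist_pt L).continuousOn
        have hy₀L : y₀ ∉ L := fun hy => by
          have : y₀ ∈ closure Y ∩ L := ⟨hy₀, hy⟩
          rw [hD] at this; exact this
        have hcpos : 0 < infDist y₀ L := (hLc.notMem_iff_infDist_pos hLne).mp hy₀L
        set c := infDist y₀ L with hcdef
        obtain ⟨n, hn⟩ := exists_nat_gt (δ / c)
        have hnc : δ / ((n : ℝ) + 1) < c := by
          rw [div_lt_iff₀ (by positivity), mul_comm]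
          exact (div_lt_iff₀ hcpos).mp (hn.trans (lt_add_one _))
        obtain ⟨z, hzW, hzfr⟩ := auxT_bump (hFclosed n) (hFne n) (hpF n)
        have hzY : z ∈ closure Y := subset_closure (mem_iUnion.mpr ⟨n, hzW⟩)
        have h1 : c ≤ infDist z L := isMinOn_iff.mp hy₀min z hzY
        have h2 : infDist z L ≤ δ / ((n : ℝ) + 1) := by
          by_contra hgt
          push_neg at hgt
          exact hzfr.2 (interior_maximal (fun w hw => le_of_lt hw)
            (isOpen_lt continuous_const (continuous_infDist_pt L)) hgt)
        linarith
      by_cases hDA : ∃ w ∈ closure Y ∩ L, w ∈ A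
      · obtain ⟨w, ⟨hwY, hwL⟩, hwA⟩ := hDA
        have hwK : w ∈ K := hmem w hwL hwA
        have h1 : IsPreconnected (insert w Y) :=
          hYconn.subset_closure (subset_insert w Y)
            (insert_subset_iff.mpr ⟨hwY, subset_closure⟩)
        have h2 : IsPreconnected (insert w Y ∪ K) :=
          IsPreconnected.union w (mem_insert w Y) hwK h1 isPreconnected_connectedComponentIn
        have h3 : insert w Y ∪ K ⊆ A := union_subset (insert_subset_iff.mpr ⟨hwA, hYA⟩) hKA
        exact h2.subset_connectedComponentIn (Or.inr hxK) h3 (Or.inl (Or.inr hpY))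
      · push_neg at hDA
        obtain ⟨w, hwY, hwL⟩ := hDne
        obtain ⟨Z, hZc, hZconn, hZA, hwZ, hZint⟩ := hZex w (hDA w ⟨hwY, hwL⟩)
        have hYK : closure Y ∩ K = ∅ := by
          rw [eq_empty_iff_forall_notMem]
          rintro z ⟨hz1, hz2⟩
          exact hDA z ⟨hz1, subset_closure hz2⟩ (hKA hz2)
        set M := closure Y ∪ Z with hMdef
        have hMc : IsCompact M := isClosed_closure.isCompact.union hZc
        have hMconn : IsConnected M :=
          ⟨⟨w, Or.inl hwY⟩, IsPreconnected.union w hwY hwZ hYconn.closure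
            hZconn.isPreconnected⟩
        have hMK : M ⊆ Kᶜ := by
          rintro z (hz | hz)
          · intro hzK
            have : z ∈ closure Y ∩ K := ⟨hz, hzK⟩
            rw [hYK] at this; exact this
          · exact fun hzK => hZA hz (hKA hzK)
        have hint : interior M = ∅ := hpT M hMc hMconn hMK (Or.inl (subset_closure hpY))
        exact absurd (eq_empty_of_subset_empty
          (hint ▸ interior_mono subset_union_right)) hZint
    · push_neg at hWA
      obtain ⟨n, hn⟩ := hWA
      obtain ⟨q, hqW, hqA⟩ := not_subset.mp hn
      obtain ⟨Z, hZc, hZconn, hZA, hqZ, hZint⟩ := hZex q hqA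
      set M := W n ∪ Z with hMdef
      have hMc : IsCompact M := (hWcompact n).union hZc
      have hMconn : IsConnected M :=
        ⟨⟨q, Or.inl hqW⟩, IsPreconnected.union q hqW hqZ (hWconn n).isPreconnected
          hZconn.isPreconnected⟩
      have hMK : M ⊆ Kᶜ :=
        union_subset (hWK n) (fun z hz hzK => hZA hz (hKA hzK))
      have hint : interior M = ∅ := hpT M hMc hMconn hMK (Or.inl (hWp n))
      exact absurd (eq_empty_of_subset_empty
        (hint ▸ interior_mono subset_union_right)) hZint
  · intro p hpK W _ _ hWsub hpW
    exact absurd hpK (hWsub hpW)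
end

section
/- If X is a continuum and f : X → X is a homeomorphism onto its image that is forward expanding on an invariant subcontinuum K (there exist λ > 1 and ε > 0 with d(f(x), f(y)) ≥ λ·d(x,y) for all x, y ∈ K with d(x,y) < ε) and f(K) = K, then K is a single point. -/
set_option maxHeartbeats 1000000


/-- If f is a homeomorphism onto its image which is forward expanding on an invariant
subcontinuum K with f(K) = K, then K is a single point. -/
theorem stmt_18 {X : Type*} [MetricSpace X] [CompactSpace X] [ConnectedSpace X]
    [Nonempty X] (f : X → X) (hf : Topology.IsEmbedding f)
    (K : Set X) (hKne : K.Nonempty) (hKcomp : IsCompact K) (hKconn : IsConnected K)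
    (hKinv : f '' K = K)
    (lam eps : ℝ) (hlam : 1 < lam) (heps : 0 < eps)
    (hexp : ∀ x ∈ K, ∀ y ∈ K, dist x y < eps → lam * dist x y ≤ dist (f x) (f y)) :
    K.Subsingleton := by
  obtain ⟨a0, ha0⟩ := hKne
  have hfc : Continuous f := hf.continuous
  have hinj : Function.Injective f := hf.injective
  have hlam0 : (0:ℝ) < lam := lt_trans one_pos hlam
  -- f maps K into K
  have hmemK : ∀ x ∈ K, f x ∈ K := fun x hx => hKinv ▸ Set.mem_image_of_mem f hx
  have hiterK : ∀ n, ∀ x ∈ K, f^[n] x ∈ K := by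
    intro n
    induction n with
    | zero => intro x hx; simpa using hx
    | succ n ih =>
      intro x hx
      rw [Function.iterate_succ_apply]
      exact ih _ (hmemK x hx)
  -- surjectivity of iterates on K
  have hsurj : ∀ n, ∀ a ∈ K, ∃ x ∈ K, f^[n] x = a := by
    intro n
    induction n with
    | zero => intro a ha; exact ⟨a, ha, rfl⟩
    | succ n ih =>
      intro a ha
      obtain ⟨y, hy, hya⟩ := ih a ha
      rw [← hKinv] at hy
      obtain ⟨x, hx, hxy⟩ := hy
      exact ⟨x, hx, by rw [Function.iterate_succ_apply, hxy, hya]⟩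
  -- choice of δ
  obtain ⟨δ, hδ0, hδkey⟩ : ∃ δ, 0 < δ ∧ ∀ x ∈ K, ∀ y ∈ K, dist (f x) (f y) < δ → dist x y < eps := by
    by_cases hS : ∃ z : X × X, z.1 ∈ K ∧ z.2 ∈ K ∧ eps ≤ dist z.1 z.2
    · set S : Set (X × X) := {z | z.1 ∈ K ∧ z.2 ∈ K ∧ eps ≤ dist z.1 z.2} with hSdef
      have hScomp : IsCompact S := by
        have hEq : S = (K ×ˢ K) ∩ {z : X × X | eps ≤ dist z.1 z.2} := by
          ext z; simp only [hSdef, Set.mem_setOf_eq, Set.mem_inter_iff, Set.mem_prod]; tauto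
        rw [hEq]
        exact (hKcomp.prod hKcomp).inter_right
          (isClosed_le continuous_const (continuous_fst.dist continuous_snd))
      obtain ⟨z0, hz0S, hz0min⟩ := hScomp.exists_isMinOn hS
        (((hfc.comp continuous_fst).dist (hfc.comp continuous_snd)).continuousOn)
      rw [isMinOn_iff] at hz0min
      have hz0pos : 0 < dist (f z0.1) (f z0.2) := by
        rw [dist_pos]
        intro h
        have := hinj h
        have : dist z0.1 z0.2 = 0 := by rw [this, dist_self]
        linarith [hz0S.2.2]
      refine ⟨dist (f z0.1) (f z0.2), hz0pos, ?_⟩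
      intro x hx y hy h
      by_contra hc
      push_neg at hc
      exact absurd (hz0min (x, y) ⟨hx, hy, hc⟩) (not_le.mpr h)
    · push_neg at hS
      exact ⟨1, one_pos, fun x hx y hy _ => hS (x, y) hx hy⟩
  -- key contraction step
  have key : ∀ x ∈ K, ∀ y ∈ K, dist (f x) (f y) < δ → lam * dist x y ≤ dist (f x) (f y) :=
    fun x hx y hy h => hexp x hx y hy (hδkey x hx y hy h)
  -- iterated contraction
  have L2 : ∀ n, ∀ x ∈ K, ∀ y ∈ K, dist (f^[n] x) (f^[n] y) < δ →
      lam ^ n * dist x y ≤ dist (f^[n] x) (f^[n] y) := by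
    intro n
    induction n with
    | zero => intro x _ y _ _; simp
    | succ n ih =>
      intro x hx y hy h
      rw [Function.iterate_succ_apply] at h ⊢
      have hfx := hmemK x hx
      have hfy := hmemK y hy
      have h1 := ih (f x) hfx (f y) hfy h
      have hge : dist (f x) (f y) ≤ lam ^ n * dist (f x) (f y) :=
        le_mul_of_one_le_left dist_nonneg (one_le_pow₀ hlam.le)
      have hlt : dist (f x) (f y) < δ := lt_of_le_of_lt (hge.trans h1) h
      have h2 := key x hx y hy hlt
      calc lam ^ (n+1) * dist x y = lam ^ n * (lam * dist x y) := by ring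
        _ ≤ lam ^ n * dist (f x) (f y) :=
            mul_le_mul_of_nonneg_left h2 (pow_nonneg hlam0.le n)
        _ ≤ dist (f^[n] (f x)) (f^[n] (f y)) := h1
  -- find a periodic point q = f^[p] q, q ∈ K, p > 0
  choose xseq hxK hxa using fun n => hsurj n a0 ha0
  obtain ⟨L, _, φ, hφ, hconv⟩ := hKcomp.tendsto_subseq hxK
  obtain ⟨M, hM⟩ := (Metric.tendsto_atTop.mp hconv) (δ/2) (by linarith)
  obtain ⟨p, i, hp, hip, hdij⟩ :
      ∃ p i, 0 < p ∧ f^[p] (xseq (i + p)) = xseq i ∧ dist (xseq i) (xseq (i + p)) < δ := by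
    set i := φ M
    set j := φ (M+1)
    have hij : i < j := hφ (Nat.lt_succ_self M)
    have h1 : dist (xseq i) L < δ/2 := hM M le_rfl
    have h2 : dist (xseq j) L < δ/2 := hM (M+1) (Nat.le_succ M)
    have hd : dist (xseq i) (xseq j) < δ :=
      calc dist (xseq i) (xseq j) ≤ dist (xseq i) L + dist (xseq j) L := dist_triangle_right _ _ _
        _ < δ := by linarith
    refine ⟨j - i, i, by omega, ?_, by rwa [show i + (j - i) = j by omega]⟩
    rw [show i + (j - i) = j by omega]
    have : f^[i] (f^[j-i] (xseq j)) = f^[i] (xseq i) := by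
      rw [← Function.iterate_add_apply, show i + (j - i) = j by omega, hxa j, hxa i]
    exact hinj.iterate i this
  -- preimage map on K for f^[p]
  choose pre hpreK hpre using hsurj p
  set T : {c // c ∈ K} → {c // c ∈ K} := fun c => ⟨pre c.1 c.2, hpreK c.1 c.2⟩ with hTdef
  set b : ℕ → {c // c ∈ K} := fun n => T^[n] ⟨xseq (i + p), hxK (i + p)⟩ with hbdef
  have hbrec : ∀ n, f^[p] (b (n+1)).1 = (b n).1 := by
    intro n
    have hb : b (n+1) = T (b n) := Function.iterate_succ_apply' T n _
    rw [hb]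
    exact hpre _ _
  have hΛ1 : ∀ m : ℕ, (1:ℝ) ≤ lam ^ m := fun m => one_le_pow₀ hlam.le
  have hb0 : (b 0).1 = xseq (i + p) := rfl
  have hcstep : ∀ n, dist (b n).1 (b (n+1)).1 < δ := by
    have base : dist (b 0).1 (b 1).1 < δ := by
      have him : dist (f^[p] (b 0).1) (f^[p] (b 1).1) < δ := by
        rw [hbrec 0, hb0, hip]
        exact hdij
      have hth := L2 p (b 0).1 (b 0).2 (b 1).1 (b 1).2 him
      rw [hbrec 0, hb0, hip] at hth
      rw [hb0]
      nlinarith [dist_nonneg (x := xseq (i + p)) (y := (b 1).1), hΛ1 p, hdij]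
    intro n
    induction n with
    | zero => exact base
    | succ n ih =>
      have him : dist (f^[p] (b (n+1)).1) (f^[p] (b (n+2)).1) < δ := by
        rw [hbrec, hbrec]; exact ih
      have := L2 p (b (n+1)).1 (b (n+1)).2 (b (n+2)).1 (b (n+2)).2 him
      rw [hbrec, hbrec] at this
      nlinarith [dist_nonneg (x := (b (n+1)).1) (y := (b (n+2)).1), hΛ1 p]
  have hcontr : ∀ n, lam ^ p * dist (b (n+1)).1 (b (n+2)).1 ≤ dist (b n).1 (b (n+1)).1 := by
    intro n
    have him : dist (f^[p] (b (n+1)).1) (f^[p] (b (n+2)).1) < δ := by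
      rw [hbrec, hbrec]; exact hcstep n
    have := L2 p (b (n+1)).1 (b (n+1)).2 (b (n+2)).1 (b (n+2)).2 him
    rwa [hbrec, hbrec] at this
  have hΛpos : (0:ℝ) < lam ^ p := pow_pos hlam0 p
  have hΛgt : (1:ℝ) < lam ^ p := one_lt_pow₀ hlam hp.ne'
  have hgeo : ∀ n, dist (b n).1 (b (n+1)).1 ≤ δ * ((lam ^ p)⁻¹) ^ n := by
    intro n
    induction n with
    | zero => simpa using (hcstep 0).le
    | succ n ih =>
      have h1 := hcontr n
      have h2 : dist (b (n+1)).1 (b (n+2)).1 ≤ dist (b n).1 (b (n+1)).1 * (lam ^ p)⁻¹ := by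
        rw [le_mul_inv_iff₀ hΛpos]; linarith [h1]
      calc dist (b (n+1)).1 (b (n+2)).1 ≤ dist (b n).1 (b (n+1)).1 * (lam ^ p)⁻¹ := h2
        _ ≤ (δ * ((lam ^ p)⁻¹) ^ n) * (lam ^ p)⁻¹ := by
            apply mul_le_mul_of_nonneg_right ih (by positivity)
        _ = δ * ((lam ^ p)⁻¹) ^ (n+1) := by ring
  have hcauchy : CauchySeq (fun n => (b n).1) :=
    cauchySeq_of_le_geometric ((lam ^ p)⁻¹) δ (inv_lt_one_of_one_lt₀ hΛgt) hgeo
  obtain ⟨q, hq⟩ := cauchySeq_tendsto_of_complete hcauchy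
  have hqK : q ∈ K := hKcomp.isClosed.mem_of_tendsto hq (Filter.Eventually.of_forall fun n => (b n).2)
  have hqfix : f^[p] q = q := by
    have h1 : Filter.Tendsto (fun n => (b (n+1)).1) Filter.atTop (nhds q) :=
      hq.comp (Filter.tendsto_add_atTop_nat 1)
    have h2 : Filter.Tendsto (fun n => f^[p] (b (n+1)).1) Filter.atTop (nhds (f^[p] q)) :=
      ((hfc.iterate p).tendsto q).comp h1
    have h3 : Filter.Tendsto (fun n => f^[p] (b (n+1)).1) Filter.atTop (nhds q) := by
      simp only [hbrec]
      exact hq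
    exact tendsto_nhds_unique h2 h3
  have hqfixk : ∀ k, f^[p * k] q = q := by
    intro k
    rw [Function.iterate_mul]
    exact Function.iterate_fixed hqfix k
  -- pullback lemma
  have pullback : ∀ k, ∀ c ∈ K, dist c q < δ →
      ∃ c' ∈ K, f^[p * k] c' = c ∧ lam ^ (p * k) * dist c' q ≤ dist c q ∧ dist c' q < δ := by
    intro k c hc hcq
    obtain ⟨c', hc'K, hc'⟩ := hsurj (p * k) c hc
    have hdist : dist (f^[p * k] c') (f^[p * k] q) < δ := by rw [hc', hqfixk]; exact hcq
    have hL := L2 (p * k) c' hc'K q hqK hdist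
    rw [hc', hqfixk] at hL
    refine ⟨c', hc'K, hc', hL, ?_⟩
    nlinarith [dist_nonneg (x := c') (y := q), hΛ1 (p * k)]
  -- the bad set and open sets W n
  set Bad : Set X := {c | c ∈ K ∧ δ ≤ dist c q} with hBadDef
  have hBadComp : IsCompact Bad := by
    have hEq : Bad = K ∩ {c | δ ≤ dist c q} := rfl
    rw [hEq]
    exact hKcomp.inter_right (isClosed_le continuous_const (continuous_id.dist continuous_const))
  set W : ℕ → Set X := fun n => (f^[p * n] '' Bad)ᶜ with hWdef
  have hWopen : ∀ n, IsOpen (W n) := fun n =>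
    (((hBadComp.image (hfc.iterate (p * n))).isClosed)).isOpen_compl
  have iffW : ∀ n, ∀ x ∈ K,
      ((∃ c ∈ K, f^[p * n] c = x ∧ dist c q < δ) ↔ x ∈ W n) := by
    intro n x hx
    constructor
    · rintro ⟨c, hcK, hcx, hcq⟩ hmem
      obtain ⟨c2, ⟨hc2K, hc2q⟩, hc2x⟩ := hmem
      have : c2 = c := hinj.iterate (p * n) (by rw [hc2x, hcx])
      rw [this] at hc2q
      linarith
    · intro hW
      obtain ⟨c, hcK, hcx⟩ := hsurj (p * n) x hx
      refine ⟨c, hcK, hcx, ?_⟩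
      by_contra hge
      push_neg at hge
      exact hW ⟨c, ⟨hcK, hge⟩, hcx⟩
  -- connectedness: every point of K has a δ-close backward iterate near q
  haveI : PreconnectedSpace K := Subtype.preconnectedSpace hKconn.isPreconnected
  set V : Set {c // c ∈ K} := {x | ∃ n, ∃ c ∈ K, f^[p * n] c = x.1 ∧ dist c q < δ} with hVdef
  have hVopen : IsOpen V := by
    have hEq : V = ⋃ n, Subtype.val ⁻¹' (W n) := by
      ext x
      simp only [hVdef, Set.mem_setOf_eq, Set.mem_iUnion, Set.mem_preimage]
      constructor
      · rintro ⟨n, hn⟩; exact ⟨n, (iffW n x.1 x.2).mp hn⟩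
      · rintro ⟨n, hn⟩; exact ⟨n, (iffW n x.1 x.2).mpr hn⟩
    rw [hEq]
    exact isOpen_iUnion fun n => (hWopen n).preimage continuous_subtype_val
  have hVclosed : IsClosed V := by
    apply isClosed_of_closure_subset
    intro x hxcl
    obtain ⟨y, hyV, hxy⟩ := Metric.mem_closure_iff.mp hxcl δ hδ0
    obtain ⟨n, c, hcK, hcx, hcq⟩ := hyV
    obtain ⟨k, hk⟩ := pow_unbounded_of_one_lt (2:ℝ) hΛgt
    obtain ⟨c', hc'K, hc'c, hc'est, hc'δ⟩ := pullback k c hcK hcq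
    obtain ⟨a', ha'K, ha'⟩ := hsurj (p * (n + k)) x.1 x.2
    have hc'x : f^[p * (n + k)] c' = y.1 := by
      rw [show p * (n + k) = p * n + p * k by ring, Function.iterate_add_apply, hc'c, hcx]
    have hxyd : dist x.1 y.1 < δ := by rwa [Subtype.dist_eq] at hxy
    have hdd : dist (f^[p * (n + k)] a') (f^[p * (n + k)] c') < δ := by
      rw [ha', hc'x]; exact hxyd
    have hL := L2 (p * (n + k)) a' ha'K c' hc'K hdd
    rw [ha', hc'x] at hL
    -- estimates
    have hpow : (lam ^ p) ^ k ≤ (lam ^ p) ^ (n + k) :=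
      pow_le_pow_right₀ hΛgt.le (Nat.le_add_left k n)
    have e1 : (lam ^ p) ^ (n + k) * dist a' c' < δ := by
      rw [← pow_mul]
      exact lt_of_le_of_lt hL hxyd
    have e2 : (lam ^ p) ^ k * dist c' q < δ := by
      have : lam ^ (p * k) * dist c' q ≤ dist c q := hc'est
      rw [pow_mul] at this
      linarith
    have e3 : (lam ^ p) ^ k * dist a' c' < δ := by
      have hd0 : (0:ℝ) ≤ dist a' c' := dist_nonneg
      nlinarith
    have hfin : dist a' q < δ := by
      have htri : dist a' q ≤ dist a' c' + dist c' q := dist_triangle _ _ _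
      have hΛk : (0:ℝ) < (lam ^ p) ^ k := pow_pos hΛpos k
      have h2δ : (lam ^ p) ^ k * dist a' q < 2 * δ := by nlinarith
      have : 2 * δ < (lam ^ p) ^ k * δ := by nlinarith
      nlinarith
    exact ⟨n + k, a', ha'K, ha', hfin⟩
  have hVne : V.Nonempty := by
    refine ⟨⟨q, hqK⟩, 0, q, hqK, ?_, by simpa using hδ0⟩
    simp
  have hVuniv : V = Set.univ := (IsClopen.eq_univ ⟨hVclosed, hVopen⟩) hVne
  have Vall : ∀ x ∈ K, ∃ n, ∃ c ∈ K, f^[p * n] c = x ∧ dist c q < δ := by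
    intro x hx
    have : (⟨x, hx⟩ : {c // c ∈ K}) ∈ V := hVuniv ▸ Set.mem_univ _
    exact this
  -- monotonicity of witnesses
  have hmono : ∀ x ∈ K, ∀ n m : ℕ, n ≤ m → (∃ c ∈ K, f^[p * n] c = x ∧ dist c q < δ) →
      ∃ c ∈ K, f^[p * m] c = x ∧ dist c q < δ := by
    rintro x hx n m hnm ⟨c, hcK, hcx, hcq⟩
    obtain ⟨c', hc'K, hc'c, _, hc'δ⟩ := pullback (m - n) c hcK hcq
    refine ⟨c', hc'K, ?_, hc'δ⟩
    rw [show p * m = p * n + p * (m - n) by rw [← Nat.mul_add, Nat.add_sub_cancel' hnm],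
      Function.iterate_add_apply, hc'c, hcx]
  -- uniform N by compactness
  obtain ⟨N, hNall⟩ : ∃ N, ∀ x ∈ K, ∃ c ∈ K, f^[p * N] c = x ∧ dist c q < δ := by
    have hcover : K ⊆ ⋃ n, W n := by
      intro x hx
      obtain ⟨n, hn⟩ := Vall x hx
      exact Set.mem_iUnion.mpr ⟨n, (iffW n x hx).mp hn⟩
    obtain ⟨t, ht⟩ := hKcomp.elim_finite_subcover W hWopen hcover
    refine ⟨t.sup id, ?_⟩
    intro x hx
    obtain ⟨n, hnt, hnx⟩ := Set.mem_iUnion₂.mp (ht hx)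
    exact hmono x hx n (t.sup id) (Finset.le_sup (f := id) hnt)
      ((iffW n x hx).mpr hnx)
  -- all forward iterates are δ-close to q
  have hclose : ∀ x ∈ K, ∀ k : ℕ, dist (f^[p * k] x) q < δ := by
    intro x hx k
    have hxk : f^[p * (N + k)] x ∈ K := hiterK _ _ hx
    obtain ⟨c, hcK, hcx, hcq⟩ := hNall _ hxk
    have heq : f^[p * N] (f^[p * k] x) = f^[p * N] c := by
      rw [hcx, ← Function.iterate_add_apply, ← Nat.mul_add]
    have := hinj.iterate (p * N) heq
    rwa [← this] at hcq
  -- conclude: every point of K equals q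
  have hall : ∀ x ∈ K, x = q := by
    intro x hx
    by_contra hne
    have hdpos : 0 < dist x q := dist_pos.mpr hne
    obtain ⟨k, hk⟩ := pow_unbounded_of_one_lt (δ / dist x q) hΛgt
    have him : dist (f^[p * k] x) (f^[p * k] q) < δ := by
      rw [hqfixk]; exact hclose x hx k
    have hL := L2 (p * k) x hx q hqK him
    rw [hqfixk] at hL
    have : lam ^ (p * k) * dist x q < δ := lt_of_le_of_lt hL (hclose x hx k)
    rw [pow_mul] at this
    rw [div_lt_iff₀ hdpos] at hk
    linarith
  intro x hx y hy
  rw [hall x hx, hall y hy]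
end
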